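/- arXiv:0905.2531 — 7 statements merged into one kernel-verified Lean document; each statement's English description precedes it below -/
import Mathlib

section
/- Every nonempty relatively weak* open subset of the closed unit ball of ℓ∞ (viewed as the dual of ℓ¹) has norm-diameter equal to 2. Equivalently: for every nonempty subset U of the closed unit ball of ℓ∞ that is open in the product (pointwise convergence) topology restricted to the ball, the supremum of ‖y − z‖∞ over y, z ∈ U equals 2. -/
open scoped ENNReal

/-- Every nonempty subset of the closed unit ball of `ℓ∞`, open in the topology of
pointwise (product) convergence restricted to the ball (the weak* topology of
`ℓ∞ = (ℓ¹)*` on the ball), has norm-diameter `2`. -/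
theorem linfty_weakstar_open_diam_two
    (U : Set (lp (fun _ : ℕ => ℝ) ∞)) (hne : U.Nonempty)
    (hopen : ∃ V : Set (ℕ → ℝ), IsOpen V ∧
      U = {x ∈ Metric.closedBall (0 : lp (fun _ : ℕ => ℝ) ∞) 1 | (x : ℕ → ℝ) ∈ V}) :
    Metric.diam U = 2 := by
  obtain ⟨V, hV, rfl⟩ := hopen
  obtain ⟨x, hxball, hxV⟩ := hne
  have hxnorm : ‖x‖ ≤ 1 := by
    rw [Metric.mem_closedBall, dist_zero_right] at hxball; exact hxball
  -- U is a subset of the closed ball, so diam ≤ 2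
  have hsub : {x ∈ Metric.closedBall (0 : lp (fun _ : ℕ => ℝ) ∞) 1 | (x : ℕ → ℝ) ∈ V}
      ⊆ Metric.closedBall 0 1 := fun y hy => hy.1
  have hbdd : Bornology.IsBounded
      {x ∈ Metric.closedBall (0 : lp (fun _ : ℕ => ℝ) ∞) 1 | (x : ℕ → ℝ) ∈ V} :=
    (Metric.isBounded_closedBall).subset hsub
  have hle : Metric.diam
      {x ∈ Metric.closedBall (0 : lp (fun _ : ℕ => ℝ) ∞) 1 | (x : ℕ → ℝ) ∈ V} ≤ 2 := by
    calc Metric.diam _ ≤ Metric.diam (Metric.closedBall (0 : lp (fun _ : ℕ => ℝ) ∞) 1) :=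
          Metric.diam_mono hsub Metric.isBounded_closedBall
      _ ≤ 2 * 1 := Metric.diam_closedBall zero_le_one
      _ = 2 := by norm_num
  -- Find a finite set of coordinates controlling membership in V
  obtain ⟨I, W, hW, hsubV⟩ := isOpen_pi_iff.1 hV (x : ℕ → ℝ) hxV
  -- pick n outside I
  obtain ⟨n, hn⟩ := I.exists_notMem
  -- coordinates of x are bounded by 1
  have hcoord : ∀ i, ‖(x : ℕ → ℝ) i‖ ≤ 1 :=
    fun i => (lp.norm_apply_le_norm ENNReal.top_ne_zero x i).trans hxnorm
  -- define y, z
  have hmem : ∀ c : ℝ, ‖c‖ ≤ 1 →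
      Memℓp (Function.update (x : ℕ → ℝ) n c) ∞ := by
    intro c hc
    apply memℓp_infty
    refine ⟨1, ?_⟩
    rintro r ⟨i, rfl⟩
    by_cases h : i = n
    · subst h; simpa using hc
    · simpa [Function.update_of_ne h] using hcoord i
  set y : lp (fun _ : ℕ => ℝ) ∞ := ⟨Function.update (x : ℕ → ℝ) n 1, hmem 1 (by norm_num)⟩
  set z : lp (fun _ : ℕ => ℝ) ∞ := ⟨Function.update (x : ℕ → ℝ) n (-1), hmem (-1) (by norm_num)⟩
  have hynorm : ‖y‖ ≤ 1 := by
    apply lp.norm_le_of_forall_le zero_le_one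
    intro i
    by_cases h : i = n
    · subst h; simp [y]
    · simpa [y, Function.update_of_ne h] using hcoord i
  have hznorm : ‖z‖ ≤ 1 := by
    apply lp.norm_le_of_forall_le zero_le_one
    intro i
    by_cases h : i = n
    · subst h; simp [z]
    · simpa [z, Function.update_of_ne h] using hcoord i
  have hyV : (y : ℕ → ℝ) ∈ V := by
    apply hsubV
    intro i hi
    have : i ≠ n := fun h => hn (h ▸ hi)
    have : (y : ℕ → ℝ) i = (x : ℕ → ℝ) i := Function.update_of_ne this _ _
    rw [this]
    exact (hW i hi).2
  have hzV : (z : ℕ → ℝ) ∈ V := by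
    apply hsubV
    intro i hi
    have : i ≠ n := fun h => hn (h ▸ hi)
    have : (z : ℕ → ℝ) i = (x : ℕ → ℝ) i := Function.update_of_ne this _ _
    rw [this]
    exact (hW i hi).2
  have hyU : y ∈ {x ∈ Metric.closedBall (0 : lp (fun _ : ℕ => ℝ) ∞) 1 | (x : ℕ → ℝ) ∈ V} :=
    ⟨by rw [Metric.mem_closedBall, dist_zero_right]; exact hynorm, hyV⟩
  have hzU : z ∈ {x ∈ Metric.closedBall (0 : lp (fun _ : ℕ => ℝ) ∞) 1 | (x : ℕ → ℝ) ∈ V} :=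
    ⟨by rw [Metric.mem_closedBall, dist_zero_right]; exact hznorm, hzV⟩
  have hdist : (2 : ℝ) ≤ dist y z := by
    have h1 : ‖(y - z : lp (fun _ : ℕ => ℝ) ∞) n‖ ≤ ‖y - z‖ :=
      lp.norm_apply_le_norm ENNReal.top_ne_zero _ n
    have h2 : (y - z : lp (fun _ : ℕ => ℝ) ∞) n = 2 := by
      have : (y - z : lp (fun _ : ℕ => ℝ) ∞) n = (y : ℕ → ℝ) n - (z : ℕ → ℝ) n := rfl
      rw [this]
      simp [y, z]
      norm_num
    rw [dist_eq_norm]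
    calc (2 : ℝ) = ‖(y - z : lp (fun _ : ℕ => ℝ) ∞) n‖ := by rw [h2]; norm_num
      _ ≤ ‖y - z‖ := h1
  have hge : (2 : ℝ) ≤ Metric.diam
      {x ∈ Metric.closedBall (0 : lp (fun _ : ℕ => ℝ) ∞) 1 | (x : ℕ → ℝ) ∈ V} :=
    hdist.trans (Metric.dist_le_diam_of_mem hbdd hyU hzU)
  linarith
end

section
/- Let X be a Banach space, x ∈ X with x ≠ 0, and 0 < a < ‖x‖ with ‖x‖ = 1 (or general). Define C = ⋃_{t ∈ 𝕂\{0}} t·(x + a·B_X), D = ⋃_{t ∈ 𝕂} t·(x + a·D_X), C' = C ∩ B_X, D' = D ∩ D_X. Then the norm-closure of C' equals D'; in particular D' is norm-closed and C' is norm-dense in D'. -/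
open Metric Filter

private lemma cone_mem_iff {𝕜 X : Type*} [RCLike 𝕜] [NormedAddCommGroup X] [NormedSpace 𝕜 X]
    (x : X) (a : ℝ) (ha0 : 0 < a) (y : X) :
    (∃ t : 𝕜, ∃ z ∈ Metric.closedBall (0 : X) 1, y = t • (x + (a : 𝕜) • z)) ↔
      ∃ t : 𝕜, ‖y - t • x‖ ≤ ‖t‖ * a := by
  constructor
  · rintro ⟨t, z, hz, rfl⟩
    refine ⟨t, ?_⟩
    rw [smul_add, add_sub_cancel_left, smul_smul, norm_smul]
    simp only [Metric.mem_closedBall, dist_zero_right] at hz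
    calc ‖t * (a:𝕜)‖ * ‖z‖ ≤ ‖t * (a:𝕜)‖ * 1 :=
          mul_le_mul_of_nonneg_left hz (norm_nonneg _)
      _ = ‖t‖ * a := by
          rw [mul_one, norm_mul, RCLike.norm_ofReal, abs_of_pos ha0]
  · rintro ⟨t, ht⟩
    rcases eq_or_ne t 0 with rfl | htne
    · simp only [norm_zero, zero_mul, zero_smul, sub_zero] at ht
      have : y = 0 := norm_le_zero_iff.mp ht
      exact ⟨0, 0, by simp, by simp [this]⟩
    · refine ⟨t, (t * (a:𝕜))⁻¹ • (y - t • x), ?_, ?_⟩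
      · simp only [Metric.mem_closedBall, dist_zero_right, norm_smul, norm_inv]
        have hpos : 0 < ‖t * (a:𝕜)‖ := by
          rw [norm_pos_iff]
          exact mul_ne_zero htne (by simp [ne_of_gt ha0])
        rw [inv_mul_le_iff₀ hpos, mul_one, norm_mul, RCLike.norm_ofReal, abs_of_pos ha0]
        exact ht
      · have hta : (t * (a:𝕜)) ≠ 0 := by
          apply mul_ne_zero htne
          simp [ne_of_gt ha0]
        rw [smul_add, smul_smul, smul_smul, mul_inv_cancel₀ hta, one_smul]
        abel

private lemma cone_closed {𝕜 X : Type*} [RCLike 𝕜] [NormedAddCommGroup X] [NormedSpace 𝕜 X]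
    (x : X) (a : ℝ) (ha : a < ‖x‖) :
    IsClosed ({y : X | ∃ t : 𝕜, ‖y - t • x‖ ≤ ‖t‖ * a} ∩ Metric.closedBall (0 : X) 1) := by
  apply IsSeqClosed.isClosed
  intro u y hu huy
  choose t ht using fun n => (hu n).1
  have hu1 : ∀ n, ‖u n‖ ≤ 1 := fun n => by
    simpa [dist_zero_right] using (hu n).2
  have hb : ∀ n, t n ∈ Metric.closedBall (0 : 𝕜) ((‖x‖ - a)⁻¹) := by
    intro n
    simp only [Metric.mem_closedBall, dist_zero_right]
    have h1 : ‖t n‖ * ‖x‖ ≤ ‖t n‖ * a + 1 := by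
      calc ‖t n‖ * ‖x‖ = ‖t n • x‖ := (norm_smul _ _).symm
        _ ≤ ‖u n - t n • x‖ + ‖u n‖ := by
            have h := norm_sub_le (u n) (u n - t n • x)
            rw [sub_sub_cancel] at h
            linarith
        _ ≤ ‖t n‖ * a + 1 := add_le_add (ht n) (hu1 n)
    have hpos : (0:ℝ) < ‖x‖ - a := by linarith
    rw [inv_eq_one_div, le_div_iff₀ hpos]
    nlinarith
  obtain ⟨s, _, φ, hφ, hts⟩ :=
    (isCompact_closedBall (0 : 𝕜) ((‖x‖ - a)⁻¹)).tendsto_subseq hb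
  constructor
  · refine ⟨s, ?_⟩
    have h1 : Filter.Tendsto (fun n => ‖u (φ n) - t (φ n) • x‖) Filter.atTop
        (nhds ‖y - s • x‖) :=
      (((huy.comp hφ.tendsto_atTop).sub (hts.smul_const x)).norm)
    have h2 : Filter.Tendsto (fun n => ‖t (φ n)‖ * a) Filter.atTop (nhds (‖s‖ * a)) :=
      (hts.norm).mul_const a
    exact le_of_tendsto_of_tendsto' h1 h2 fun n => ht (φ n)
  · exact Metric.isClosed_closedBall.mem_of_tendsto huy (Filter.Eventually.of_forall fun n => (hu n).2)

/-- With `C' = C ∩ B_X` and `D' = D ∩ D_X` (cones as in the paper), the norm-closure of `C'`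
equals `D'`; in particular `D'` is norm-closed and `C'` is norm-dense in `D'`. -/
theorem closure_cut_open_cone {𝕜 X : Type*} [RCLike 𝕜]
    [NormedAddCommGroup X] [NormedSpace 𝕜 X] [CompleteSpace X]
    (x : X) (hx : x ≠ 0) (a : ℝ) (ha0 : 0 < a) (ha : a < ‖x‖) :
    closure ({y : X | ∃ t : 𝕜, t ≠ 0 ∧ ∃ z ∈ Metric.ball (0 : X) 1, y = t • (x + (a : 𝕜) • z)} ∩
        Metric.ball (0 : X) 1) =
      {y : X | ∃ t : 𝕜, ∃ z ∈ Metric.closedBall (0 : X) 1, y = t • (x + (a : 𝕜) • z)} ∩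
        Metric.closedBall (0 : X) 1 := by
  have hset : {y : X | ∃ t : 𝕜, ∃ z ∈ Metric.closedBall (0 : X) 1, y = t • (x + (a : 𝕜) • z)} =
      {y : X | ∃ t : 𝕜, ‖y - t • x‖ ≤ ‖t‖ * a} := Set.ext fun y => cone_mem_iff x a ha0 y
  apply Set.Subset.antisymm
  · apply closure_minimal
    · rintro y ⟨⟨t, _, z, hz, hy⟩, hyb⟩
      exact ⟨⟨t, z, Metric.ball_subset_closedBall hz, hy⟩, Metric.ball_subset_closedBall hyb⟩
    · rw [hset]
      exact cone_closed x a ha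
  · rintro y ⟨⟨t, z, hz, hy⟩, hyb⟩
    have hz1 : ‖z‖ ≤ 1 := by simpa [dist_zero_right] using hz
    have hy1 : ‖y‖ ≤ 1 := by simpa [dist_zero_right] using hyb
    have hx0 : (0:ℝ) < ‖x‖ := norm_pos_iff.mpr hx
    rw [Metric.mem_closure_iff]
    intro ε hε
    rcases eq_or_ne t 0 with rfl | htne
    · -- y = 0; approximate by small multiples of x
      have hy0 : y = 0 := by simp [hy]
      set s : ℝ := min ε 1 / (2 * ‖x‖) with hs
      have hs0 : 0 < s := by positivity
      have hsx : s * ‖x‖ = min ε 1 / 2 := by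
        rw [hs]
        field_simp
      refine ⟨((s:ℝ):𝕜) • (x + (a:𝕜) • (0:X)), ⟨⟨((s:ℝ):𝕜), ?_, 0, by simp, rfl⟩, ?_⟩, ?_⟩
      · exact_mod_cast ne_of_gt hs0
      · simp only [smul_zero, add_zero, Metric.mem_ball, dist_zero_right, norm_smul,
          RCLike.norm_ofReal, abs_of_pos hs0, hsx]
        have := min_le_right ε 1
        linarith
      · rw [hy0, dist_eq_norm, zero_sub, norm_neg]
        simp only [smul_zero, add_zero]
        rw [norm_smul, RCLike.norm_ofReal, abs_of_pos hs0, hsx]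
        have := min_le_left ε 1
        linarith
    · set M : ℝ := ‖t‖ * a with hM
      have hM0 : 0 < M := mul_pos (norm_pos_iff.mpr htne) ha0
      set δ : ℝ := min ε 1 / 4 with hδ
      have hδ0 : 0 < δ := by positivity
      have hδε : δ ≤ ε / 4 := by
        apply div_le_div_of_nonneg_right ?_ (by norm_num)
        · exact min_le_left _ _
      have hδ1 : δ ≤ 1 / 4 := by
        apply div_le_div_of_nonneg_right ?_ (by norm_num)
        · exact min_le_right _ _
      set r : ℝ := 1 - δ / (M + 1) with hr
      have hdm : 0 < δ / (M + 1) := by positivity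
      have hdm1 : δ / (M + 1) ≤ δ := div_le_self hδ0.le (by linarith)
      have hr0 : 0 < r := by simp only [hr]; linarith
      have hr1 : r < 1 := by simp only [hr]; linarith
      have hrM : (1 - r) * M < δ := by
        have h1 : 1 - r = δ / (M + 1) := by simp [hr]
        rw [h1, div_mul_eq_mul_div, div_lt_iff₀ (by linarith)]
        nlinarith
      set c : 𝕜 := ((1 - δ : ℝ) : 𝕜) with hc
      set K : 𝕜 := (c * (((r:ℝ):𝕜) - 1)) * (t * (a:𝕜)) with hK
      have hnc : ‖c‖ = 1 - δ := by
        rw [hc, RCLike.norm_ofReal, abs_of_pos (by linarith)]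
      have hnr : ‖((r:ℝ):𝕜) - 1‖ = 1 - r := by
        rw [show ((r:ℝ):𝕜) - 1 = (((r - 1 : ℝ)):𝕜) by push_cast; ring,
          RCLike.norm_ofReal, abs_of_neg (by linarith)]
        ring
      have hnK : ‖K‖ < δ := by
        rw [hK, norm_mul, norm_mul, norm_mul, RCLike.norm_ofReal a, abs_of_pos ha0, hnc, hnr,
          ← hM]
        nlinarith [mul_nonneg hδ0.le (mul_nonneg (show (0:ℝ) ≤ 1 - r by linarith) hM0.le)]
      set b : X := (c * t) • (x + (a:𝕜) • (((r:ℝ):𝕜) • z)) with hb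
      have hbid : b = c • y + K • z := by
        rw [hb, hK, hy]
        simp only [smul_add, smul_smul]
        rw [add_assoc, ← add_smul]
        congr 1
        ring_nf
      have hbn : ‖b‖ < 1 := by
        calc ‖b‖ ≤ ‖c • y‖ + ‖K • z‖ := by rw [hbid]; exact norm_add_le _ _
          _ = ‖c‖ * ‖y‖ + ‖K‖ * ‖z‖ := by rw [norm_smul, norm_smul]
          _ < 1 := by
              have h1 : ‖c‖ * ‖y‖ ≤ 1 - δ := by
                rw [hnc]; nlinarith [norm_nonneg y]
              have h2 : ‖K‖ * ‖z‖ < δ := by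
                nlinarith [norm_nonneg K, norm_nonneg z, norm_nonneg z]
              linarith
      refine ⟨b, ⟨⟨c * t, ?_, ((r:ℝ):𝕜) • z, ?_, rfl⟩, by simpa [dist_zero_right] using hbn⟩, ?_⟩
      · apply mul_ne_zero ?_ htne
        rw [hc]
        exact_mod_cast ne_of_gt (show (0:ℝ) < 1 - δ by linarith)
      · simp only [Metric.mem_ball, dist_zero_right, norm_smul, RCLike.norm_ofReal,
          abs_of_pos hr0]
        nlinarith
      · have hyd : y - b = ((1:𝕜) - c) • y - K • z := by
          rw [hbid, sub_smul, one_smul]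
          abel
        have hn1c : ‖(1:𝕜) - c‖ = δ := by
          rw [show (1:𝕜) - c = ((δ:ℝ):𝕜) by rw [hc]; push_cast; ring,
            RCLike.norm_ofReal, abs_of_pos hδ0]
        rw [dist_eq_norm, hyd]
        calc ‖((1:𝕜) - c) • y - K • z‖ ≤ ‖((1:𝕜) - c) • y‖ + ‖K • z‖ := norm_sub_le _ _
          _ = ‖(1:𝕜) - c‖ * ‖y‖ + ‖K‖ * ‖z‖ := by rw [norm_smul, norm_smul]
          _ < ε := by
              rw [hn1c]
              have h3 : δ * ‖y‖ ≤ δ := mul_le_of_le_one_right hδ0.le hy1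
              have h4 : ‖K‖ * ‖z‖ ≤ ‖K‖ := mul_le_of_le_one_right (norm_nonneg K) hz1
              linarith
end

section
/- Let X be a Banach space which is a dual space (X = Y* with the dual norm), let x ∈ X, x ≠ 0, and 0 < a < ‖x‖. Define D = ⋃_{t ∈ 𝕂} t·(x + a·D_X) and D' = D ∩ D_X. Then D' is weak* closed in X. -/
open NormedSpace

/-- In a dual Banach space `X = Y*` with the dual norm, the set `D' = D ∩ D_X`,
where `D = ⋃_{t ∈ 𝕜} t(x + a D_X)`, `x ≠ 0`, `0 < a < ‖x‖`, is weak* closed. -/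
theorem cut_cone_weakstar_closed {𝕜 Y : Type*} [RCLike 𝕜]
    [NormedAddCommGroup Y] [NormedSpace 𝕜 Y]
    (x : StrongDual 𝕜 Y) (hx : x ≠ 0) (a : ℝ) (ha0 : 0 < a) (ha : a < ‖x‖) :
    IsClosed (StrongDual.toWeakDual ''
      ({y : StrongDual 𝕜 Y | ∃ t : 𝕜, ∃ z ∈ Metric.closedBall (0 : StrongDual 𝕜 Y) 1,
          y = t • (x + (a : 𝕜) • z)} ∩ Metric.closedBall (0 : StrongDual 𝕜 Y) 1)) := by
  have hxa : (0 : ℝ) < ‖x‖ - a := by linarith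
  set C : ℝ := (‖x‖ - a)⁻¹ with hC
  set B : Set (WeakDual 𝕜 Y) := WeakDual.toStrongDual ⁻¹' Metric.closedBall 0 1 with hB
  set f : 𝕜 × WeakDual 𝕜 Y → WeakDual 𝕜 Y :=
    fun p => p.1 • (StrongDual.toWeakDual x + (a : 𝕜) • p.2) with hf
  have hfc : Continuous f := by
    apply continuous_fst.smul
    exact continuous_const.add (by fun_prop)
  have hK : IsCompact ((Metric.closedBall (0 : 𝕜) C) ×ˢ B) :=
    (isCompact_closedBall _ _).prod (WeakDual.isCompact_closedBall (𝕜 := 𝕜) 0 1)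
  have hBc : IsClosed B := (WeakDual.isCompact_closedBall (𝕜 := 𝕜) 0 1).isClosed
  have key : StrongDual.toWeakDual ''
      ({y : StrongDual 𝕜 Y | ∃ t : 𝕜, ∃ z ∈ Metric.closedBall (0 : StrongDual 𝕜 Y) 1,
          y = t • (x + (a : 𝕜) • z)} ∩ Metric.closedBall (0 : StrongDual 𝕜 Y) 1)
      = f '' ((Metric.closedBall (0 : 𝕜) C) ×ˢ B) ∩ B := by
    ext w
    constructor
    · rintro ⟨y, ⟨⟨t, z, hz, rfl⟩, hy⟩, rfl⟩
      have hz' : ‖z‖ ≤ 1 := by simpa using hz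
      have hy' : ‖t • (x + (a : 𝕜) • z)‖ ≤ 1 := by simpa using hy
      have haz : ‖(a : 𝕜) • z‖ ≤ a := by
        rw [norm_smul, RCLike.norm_ofReal, abs_of_pos ha0]
        nlinarith
      have hnorm : ‖x‖ - a ≤ ‖x + (a : 𝕜) • z‖ := by
        have h1 : ‖x‖ ≤ ‖x + (a : 𝕜) • z‖ + ‖(a : 𝕜) • z‖ := by
          calc ‖x‖ = ‖(x + (a : 𝕜) • z) - (a : 𝕜) • z‖ := by rw [add_sub_cancel_right]
          _ ≤ _ := norm_sub_le _ _
        linarith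
      have ht : ‖t‖ ≤ C := by
        have h2 : ‖t‖ * (‖x‖ - a) ≤ 1 := by
          calc ‖t‖ * (‖x‖ - a) ≤ ‖t‖ * ‖x + (a : 𝕜) • z‖ := by
                gcongr
          _ = ‖t • (x + (a : 𝕜) • z)‖ := (norm_smul _ _).symm
          _ ≤ 1 := hy'
        rw [hC, ← one_div, le_div_iff₀ hxa]
        exact h2
      refine ⟨⟨(t, StrongDual.toWeakDual z), ⟨?_, ?_⟩, rfl⟩, ?_⟩
      · simpa using ht
      · simp only [hB, Set.mem_preimage]
        simpa using hz'
      · simp only [hB, Set.mem_preimage]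
        exact hy
    · rintro ⟨⟨⟨t, z⟩, ⟨ht, hzB⟩, rfl⟩, hwB⟩
      refine ⟨t • (x + (a : 𝕜) • WeakDual.toStrongDual z),
        ⟨⟨t, WeakDual.toStrongDual z, ?_, rfl⟩, ?_⟩, rfl⟩
      · simp only [hB, Set.mem_preimage] at hzB
        exact hzB
      · exact hwB
  rw [key]
  exact ((hK.image hfc).isClosed).inter hBc
end

section
/- Let X be a separable infinite-dimensional Banach space and let ε' > 2ε > 0 be such that every nonempty relatively weak* open subset of the closed dual unit ball D_{X*} has norm-diameter greater than ε'. Then there exists a sequence (ξₙ) in X* with: (i) ‖ξₙ‖ = 1 for all n; (ii) {ξₙ : n ∈ ℕ} is weak* dense in D_{X*}; (iii) dist(ξₙ, span{ξ₁, …, ξ_{n−1}}) > ε for every n ≥ 2. -/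
set_option maxHeartbeats 1000000
set_option synthInstance.maxHeartbeats 1000000
set_option linter.unusedSectionVars false
set_option linter.unusedVariables false

open Metric NormedSpace Pointwise

section Aux
variable {X : Type*} [NormedAddCommGroup X] [NormedSpace ℝ X]



lemma basic_nbhd {W : Set (WeakDual ℝ X)} (hW : IsOpen W) {f₀ : StrongDual ℝ X}
    (hf₀ : StrongDual.toWeakDual f₀ ∈ W) :
    ∃ (s : Finset X) (δ : ℝ), 0 < δ ∧
      ∀ g : StrongDual ℝ X, (∀ x ∈ s, |g x - f₀ x| < δ) → StrongDual.toWeakDual g ∈ W := by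
  obtain ⟨U, hU, hUW⟩ := isOpen_induced_iff.mp hW
  have hfU : (fun y => f₀ y) ∈ U := by
    have : StrongDual.toWeakDual f₀ ∈ W := hf₀
    rw [← hUW] at this; exact this
  obtain ⟨I, u, hIu, hpi⟩ := isOpen_pi_iff.mp hU _ hfU
  have hd : ∀ a ∈ I, ∃ d > 0, ball (f₀ a) d ⊆ u a := by
    intro a ha
    exact Metric.isOpen_iff.mp (hIu a ha).1 _ (hIu a ha).2
  choose d hd0 hdb using hd
  rcases I.eq_empty_or_nonempty with hI | hI
  · refine ⟨I, 1, one_pos, fun g hg => ?_⟩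
    rw [← hUW]
    apply hpi
    intro a ha
    simp [hI] at ha
  · classical
    refine ⟨I, I.inf' hI (fun a => if h : a ∈ I then d a h else 1), ?_, fun g hg => ?_⟩
    · rw [Finset.lt_inf'_iff]
      intro a ha
      simp only [dif_pos ha]
      exact hd0 a ha
    · rw [← hUW]
      apply hpi
      intro a ha
      apply hdb a ha
      rw [mem_ball, Real.dist_eq]
      calc |g a - f₀ a| < _ := hg a ha
        _ ≤ d a ha := by
          have h2 : a ∈ I := ha
          have := Finset.inf'_le (fun a => if h : a ∈ I then d a h else 1) h2
          simp only [dif_pos h2] at this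
          exact this


-- covering induction lemma
lemma cover_lemma (t : Finset (StrongDual ℝ X)) (r : ℝ) :
    ∀ W : Set (WeakDual ℝ X), IsOpen W →
    (∃ f ∈ closedBall (0 : StrongDual ℝ X) 1, StrongDual.toWeakDual f ∈ W) →
    (∀ f ∈ closedBall (0 : StrongDual ℝ X) 1, StrongDual.toWeakDual f ∈ W → ∃ p ∈ t, dist f p ≤ r) →
    ∃ p ∈ t, ∃ W' : Set (WeakDual ℝ X), IsOpen W' ∧
      (∃ f ∈ closedBall (0 : StrongDual ℝ X) 1, StrongDual.toWeakDual f ∈ W') ∧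
      ∀ f ∈ closedBall (0 : StrongDual ℝ X) 1, StrongDual.toWeakDual f ∈ W' → dist f p ≤ r := by
  classical
  induction t using Finset.induction_on with
  | empty =>
    intro W hW ⟨f, hfD, hfW⟩ hcov
    obtain ⟨p, hp, -⟩ := hcov f hfD hfW
    exact absurd hp (Finset.notMem_empty p)
  | insert a t' ha ih =>
    intro W hW hne hcov
    by_cases h : ∃ f ∈ closedBall (0 : StrongDual ℝ X) 1,
        StrongDual.toWeakDual f ∈ W ∩ (WeakDual.toStrongDual ⁻¹' closedBall a r)ᶜ
    · have hcov' : ∀ f ∈ closedBall (0 : StrongDual ℝ X) 1,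
          StrongDual.toWeakDual f ∈ W ∩ (WeakDual.toStrongDual ⁻¹' closedBall a r)ᶜ →
          ∃ p ∈ t', dist f p ≤ r := by
        intro f hfD hfW
        obtain ⟨p, hp, hd⟩ := hcov f hfD hfW.1
        rcases Finset.mem_insert.mp hp with rfl | hp'
        · exact absurd (mem_closedBall.mpr hd) hfW.2
        · exact ⟨p, hp', hd⟩
      obtain ⟨p, hp, W', h1, h2, h3⟩ := ih (W ∩ (WeakDual.toStrongDual ⁻¹' closedBall a r)ᶜ)
        (hW.inter (WeakDual.isClosed_closedBall a r).isOpen_compl) h hcov'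
      exact ⟨p, Finset.mem_insert_of_mem hp, W', h1, h2, h3⟩
    · push_neg at h
      refine ⟨a, Finset.mem_insert_self a t', W, hW, hne, fun f hfD hfW => ?_⟩
      have := h f hfD
      rw [Set.mem_inter_iff, not_and] at this
      exact mem_closedBall.mp (Set.not_notMem.mp (this hfW))


lemma key_lemma [CompleteSpace X] (hinf : ¬ FiniteDimensional ℝ X)
    (ε ε' : ℝ) (hε : 0 < ε) (hεε' : 2 * ε < ε')
    (hdiam : ∀ V : Set (StrongDual ℝ X), V.Nonempty →
      (∃ W : Set (WeakDual ℝ X), IsOpen W ∧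
        V = {f ∈ closedBall (0 : StrongDual ℝ X) 1 | StrongDual.toWeakDual f ∈ W}) →
      ε' < Metric.diam V)
    (F : Submodule ℝ (StrongDual ℝ X)) (hF : FiniteDimensional ℝ F)
    (W : Set (WeakDual ℝ X)) (hW : IsOpen W)
    (hne : ∃ f ∈ closedBall (0 : StrongDual ℝ X) 1, StrongDual.toWeakDual f ∈ W) :
    ∃ ξ : StrongDual ℝ X, ‖ξ‖ = 1 ∧ StrongDual.toWeakDual ξ ∈ W ∧
      ε < Metric.infDist ξ (F : Set (StrongDual ℝ X)) := by
  classical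
  -- ε' < 2
  have hball : (closedBall (0 : StrongDual ℝ X) 1) =
      {f ∈ closedBall (0 : StrongDual ℝ X) 1 | StrongDual.toWeakDual f ∈ (Set.univ : Set (WeakDual ℝ X))} := by
    ext f; simp
  have hε'2 : ε' < 2 := by
    have h1 := hdiam (closedBall (0 : StrongDual ℝ X) 1) ⟨0, mem_closedBall_self zero_le_one⟩
      ⟨Set.univ, isOpen_univ, hball⟩
    have h2 : diam (closedBall (0 : StrongDual ℝ X) 1) ≤ 2 * 1 := diam_closedBall zero_le_one
    linarith
  set ε₂ : ℝ := ε / 2 + ε' / 4 with hε₂def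
  have hεε₂ : ε < ε₂ := by rw [hε₂def]; linarith
  have hε₂1 : ε₂ < 1 := by rw [hε₂def]; linarith
  have hε₂0 : 0 < ε₂ := by rw [hε₂def]; linarith
  set η : ℝ := (ε' - 2 * ε) / 8 with hηdef
  have hη0 : 0 < η := by rw [hηdef]; linarith
  have hsum : 2 * (ε₂ + η) < ε' := by rw [hε₂def, hηdef]; linarith
  -- the compact approximating set
  haveI := hF
  set K' : Set (StrongDual ℝ X) := (F : Set (StrongDual ℝ X)) ∩ closedBall 0 2 with hK'def
  have hK'c : IsCompact K' := by
    have himg : K' = Subtype.val '' (closedBall (0 : F) 2) := by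
      ext x
      constructor
      · rintro ⟨hxF, hx2⟩
        refine ⟨⟨x, hxF⟩, ?_, rfl⟩
        simpa [mem_closedBall, Subtype.dist_eq, dist_zero_right, Submodule.coe_norm] using mem_closedBall.mp hx2
      · rintro ⟨⟨y, hyF⟩, hy, rfl⟩
        refine ⟨hyF, ?_⟩
        simpa [mem_closedBall, Subtype.dist_eq, dist_zero_right, Submodule.coe_norm] using hy
    rw [himg]
    exact (isCompact_closedBall (0 : F) 2).image continuous_subtype_val
  set Tset : Set (StrongDual ℝ X) := K' + closedBall (0 : StrongDual ℝ X) ε₂ with hTdef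
  set TsetW : Set (WeakDual ℝ X) := StrongDual.toWeakDual '' Tset with hTWdef
  -- TsetW is compact hence closed
  have hTWc : IsCompact TsetW := by
    have : TsetW = (StrongDual.toWeakDual '' K') + (StrongDual.toWeakDual '' closedBall 0 ε₂) := by
      ext g
      simp only [hTWdef, hTdef, Set.mem_add, Set.mem_image]
      constructor
      · rintro ⟨f, ⟨p, hp, b, hb, rfl⟩, rfl⟩
        exact ⟨_, ⟨p, hp, rfl⟩, _, ⟨b, hb, rfl⟩, rfl⟩
      · rintro ⟨_, ⟨p, hp, rfl⟩, _, ⟨b, hb, rfl⟩, rfl⟩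
        exact ⟨p + b, ⟨p, hp, b, hb, rfl⟩, by rfl⟩
    rw [this]
    have h1 : IsCompact (StrongDual.toWeakDual '' K') :=
      hK'c.image Dual.toWeakDual_continuous
    have h2 : IsCompact (StrongDual.toWeakDual '' closedBall (0 : StrongDual ℝ X) ε₂) := by
      have : StrongDual.toWeakDual '' closedBall (0 : StrongDual ℝ X) ε₂ =
          WeakDual.toStrongDual ⁻¹' closedBall (0 : StrongDual ℝ X) ε₂ := by
        ext g
        constructor
        · rintro ⟨f, hf, rfl⟩; exact hf
        · intro hg; exact ⟨WeakDual.toStrongDual g, hg, rfl⟩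
      rw [this]
      exact WeakDual.isCompact_closedBall (0 : StrongDual ℝ X) ε₂
    exact h1.add h2
  have hTWclosed : IsClosed TsetW := hTWc.isClosed
  -- membership fact
  have hout : ∀ f : StrongDual ℝ X, ‖f‖ ≤ 1 → f ∉ Tset →
      ε₂ ≤ Metric.infDist f (F : Set (StrongDual ℝ X)) := by
    intro f hf1 hfT
    by_contra hlt
    push_neg at hlt
    have hFne : (F : Set (StrongDual ℝ X)).Nonempty := ⟨0, F.zero_mem⟩
    obtain ⟨p, hpF, hdp⟩ := (Metric.infDist_lt_iff hFne).mp hlt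
    have hp2 : ‖p‖ ≤ 2 := by
      have h3 : ‖p‖ ≤ ‖f‖ + dist f p := by
        rw [dist_eq_norm, norm_sub_rev]
        exact norm_le_norm_add_norm_sub' p f
      linarith
    refine hfT (Set.mem_add.mpr ⟨p, ⟨hpF, mem_closedBall.mpr (by simpa [dist_zero_right] using hp2)⟩,
      f - p, mem_closedBall.mpr ?_, by abel⟩)
    rw [dist_zero_right, ← dist_eq_norm]
    exact hdp.le
  -- dichotomy
  set W₂ : Set (WeakDual ℝ X) := W ∩ TsetWᶜ with hW₂def
  have hW₂open : IsOpen W₂ := hW.inter hTWclosed.isOpen_compl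
  by_cases hW₂ne : ∃ f ∈ closedBall (0 : StrongDual ℝ X) 1, StrongDual.toWeakDual f ∈ W₂
  · -- main construction
    obtain ⟨f₀, hf₀D, hf₀W₂⟩ := hW₂ne
    obtain ⟨s, δ, hδ0, hsδ⟩ := basic_nbhd hW₂open hf₀W₂
    set M : Submodule ℝ X := Submodule.span ℝ (s : Set X) with hMdef
    haveI hMfd : FiniteDimensional ℝ M := FiniteDimensional.span_of_finite ℝ s.finite_toSet
    have hMtop : M ≠ ⊤ := by
      intro h
      apply hinf
      haveI : FiniteDimensional ℝ (⊤ : Submodule ℝ X) := h ▸ hMfd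
      exact Submodule.topEquiv.finiteDimensional
    obtain ⟨x₀, hx₀⟩ : ∃ x₀, x₀ ∉ M := by
      by_contra h; push_neg at h; exact hMtop (Submodule.eq_top_iff'.mpr h)
    haveI : IsClosed (M : Set X) := M.closed_of_finiteDimensional
    have hx₀q : (Submodule.Quotient.mk x₀ : X ⧸ M) ≠ 0 := by
      simpa [Submodule.Quotient.mk_eq_zero] using hx₀
    obtain ⟨gq, hgq⟩ := SeparatingDual.exists_eq_one (R := ℝ) hx₀q
    have hmkb : ∀ x : X, ‖M.mkQ x‖ ≤ 1 * ‖x‖ := fun x => by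
      simpa using Submodule.Quotient.norm_mk_le M x
    set mkC : X →L[ℝ] X ⧸ M := LinearMap.mkContinuous M.mkQ 1 hmkb with hmkCdef
    set h₀ : StrongDual ℝ X := gq.comp mkC with hh₀def
    have hh₀x₀ : h₀ x₀ = 1 := hgq
    have hh₀ne : h₀ ≠ 0 := fun h => by simp [h] at hh₀x₀
    have hh₀pos : (0:ℝ) < ‖h₀‖ := norm_pos_iff.mpr hh₀ne
    have hs0 : ∀ x ∈ s, h₀ x = 0 := by
      intro x hx
      have hxM : x ∈ M := Submodule.subset_span hx
      have hmk0 : M.mkQ x = 0 := by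
        simpa [Submodule.Quotient.mk_eq_zero] using hxM
      calc h₀ x = gq (M.mkQ x) := rfl
        _ = 0 := by rw [hmk0, map_zero]
    set T : ℝ := (1 + ‖f₀‖) / ‖h₀‖ with hTdef2
    have hT0 : (0:ℝ) ≤ T := div_nonneg (by positivity) hh₀pos.le
    have hcont : ContinuousOn (fun t : ℝ => ‖f₀ + t • h₀‖) (Set.Icc 0 T) :=
      (Continuous.norm (continuous_const.add (continuous_id.smul continuous_const))).continuousOn
    have hφ0 : ‖f₀ + (0:ℝ) • h₀‖ ≤ 1 := by
      simpa [zero_smul, dist_zero_right] using mem_closedBall.mp hf₀D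
    have hφT : 1 ≤ ‖f₀ + T • h₀‖ := by
      have h1 : ‖T • h₀‖ = 1 + ‖f₀‖ := by
        rw [norm_smul, Real.norm_eq_abs, abs_of_nonneg hT0, hTdef2,
          div_mul_cancel₀ _ (ne_of_gt hh₀pos)]
      have h2 : ‖T • h₀‖ ≤ ‖f₀ + T • h₀‖ + ‖f₀‖ := by
        have he : T • h₀ = (f₀ + T • h₀) - f₀ := by abel
        nth_rewrite 1 [he]
        exact norm_sub_le (f₀ + T • h₀) f₀
      linarith
    have hmem : (1:ℝ) ∈ Set.Icc (‖f₀ + (0:ℝ) • h₀‖) (‖f₀ + T • h₀‖) := ⟨hφ0, hφT⟩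
    obtain ⟨t, ht, hφt⟩ := intermediate_value_Icc hT0 hcont hmem
    have hmemW₂ : StrongDual.toWeakDual (f₀ + t • h₀) ∈ W₂ := by
      apply hsδ
      intro x hx
      simp [ContinuousLinearMap.add_apply, ContinuousLinearMap.smul_apply, hs0 x hx, hδ0]
    refine ⟨f₀ + t • h₀, hφt, hmemW₂.1, ?_⟩
    have hnotT : (f₀ + t • h₀) ∉ Tset := by
      intro hmem2
      exact hmemW₂.2 ⟨_, hmem2, rfl⟩
    have hfin := hout (f₀ + t • h₀) (le_of_eq hφt) hnotT
    linarith
  · exfalso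
    push_neg at hW₂ne
    have hcovT : ∀ f ∈ closedBall (0 : StrongDual ℝ X) 1, StrongDual.toWeakDual f ∈ W → f ∈ Tset := by
      intro f hfD hfW
      have h1 := hW₂ne f hfD
      rw [hW₂def, Set.mem_inter_iff, not_and] at h1
      obtain ⟨g, hg, hgeq⟩ := Set.not_notMem.mp (h1 hfW)
      have hgf : g = f := StrongDual.toWeakDual.injective hgeq
      rwa [← hgf]
    obtain ⟨N, hNfin, hNcov⟩ := Metric.totallyBounded_iff.mp hK'c.totallyBounded η hη0
    classical
    have hcov2 : ∀ f ∈ closedBall (0 : StrongDual ℝ X) 1, StrongDual.toWeakDual f ∈ W →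
        ∃ p ∈ hNfin.toFinset, dist f p ≤ ε₂ + η := by
      intro f hfD hfW
      obtain ⟨p', hp', b, hb, hfe⟩ := Set.mem_add.mp (hcovT f hfD hfW)
      have h2 := hNcov hp'
      rw [Set.mem_iUnion₂] at h2
      obtain ⟨p, hpN, hpb⟩ := h2
      refine ⟨p, hNfin.mem_toFinset.mpr hpN, ?_⟩
      have hd1 : dist f p' ≤ ε₂ := by
        rw [← hfe, dist_eq_norm]
        simpa [dist_zero_right] using mem_closedBall.mp hb
      have hd2 : dist p' p < η := mem_ball.mp hpb
      calc dist f p ≤ dist f p' + dist p' p := dist_triangle f p' p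
        _ ≤ ε₂ + η := by linarith
    obtain ⟨p, hp, W', hW'open, hW'ne, hW'sub⟩ :=
      cover_lemma hNfin.toFinset (ε₂ + η) W hW hne hcov2
    obtain ⟨f', hf'D, hf'W'⟩ := hW'ne
    have hdV := hdiam {f ∈ closedBall (0 : StrongDual ℝ X) 1 | StrongDual.toWeakDual f ∈ W'}
      ⟨f', hf'D, hf'W'⟩ ⟨W', hW'open, rfl⟩
    have hsub : {f ∈ closedBall (0 : StrongDual ℝ X) 1 | StrongDual.toWeakDual f ∈ W'} ⊆
        closedBall p (ε₂ + η) := fun f hf => mem_closedBall.mpr (hW'sub f hf.1 hf.2)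
    have hd1 : diam {f ∈ closedBall (0 : StrongDual ℝ X) 1 | StrongDual.toWeakDual f ∈ W'} ≤
        diam (closedBall p (ε₂ + η)) := diam_mono hsub isBounded_closedBall
    have hd2 : diam (closedBall p (ε₂ + η)) ≤ 2 * (ε₂ + η) :=
      diam_closedBall (by linarith)
    linarith

end Aux

/-- Lemma on choosing a weak* dense, norm-separated sequence in the dual sphere:
if `X` is a separable infinite-dimensional Banach space and `ε' > 2ε > 0` are such that
every nonempty relatively weak* open subset of the closed dual ball has norm-diameter `> ε'`,
then there is a sequence `(ξₙ)` of norm-one functionals which is weak* dense in the closed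
dual ball and satisfies `dist(ξₙ, span{ξ₀, …, ξ_{n−1}}) > ε` for every `n ≥ 1`. -/
theorem exists_weakstar_dense_separated_sequence
    {X : Type*} [NormedAddCommGroup X] [NormedSpace ℝ X] [CompleteSpace X]
    [TopologicalSpace.SeparableSpace X] (hinf : ¬ FiniteDimensional ℝ X)
    (ε ε' : ℝ) (hε : 0 < ε) (hεε' : 2 * ε < ε')
    (hdiam : ∀ V : Set (StrongDual ℝ X), V.Nonempty →
      (∃ W : Set (WeakDual ℝ X), IsOpen W ∧
        V = {f ∈ closedBall (0 : StrongDual ℝ X) 1 | StrongDual.toWeakDual f ∈ W}) →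
      ε' < Metric.diam V) :
    ∃ ξ : ℕ → StrongDual ℝ X,
      (∀ n, ‖ξ n‖ = 1) ∧
      (closedBall (0 : StrongDual ℝ X) 1 ⊆
        StrongDual.toWeakDual ⁻¹' closure (StrongDual.toWeakDual '' Set.range ξ)) ∧
      (∀ n : ℕ, 1 ≤ n →
        ε < Metric.infDist (ξ n)
          (Submodule.span ℝ (ξ '' {m | m < n}) : Set (StrongDual ℝ X))) := by
  classical
  haveI : Nonempty X := ⟨0⟩
  set u : ℕ → X := TopologicalSpace.denseSeq X with hudef
  have hu : DenseRange u := TopologicalSpace.denseRange_denseSeq X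
  -- basic weak* sets indexed by codes
  set Wset : Option (List (ℕ × ℚ) × ℚ) → Set (WeakDual ℝ X) := fun o =>
    match o with
    | none => Set.univ
    | some (l, q) => {g : WeakDual ℝ X | ∀ p ∈ l, |g (u p.1) - (p.2 : ℝ)| < (q : ℝ)}
    with hWsetdef
  have hWsetopen : ∀ o, IsOpen (Wset o) := by
    rintro (_ | ⟨l, q⟩)
    · exact isOpen_univ
    · have heq : Wset (some (l, q)) =
          ⋂ p ∈ l.toFinset, {g : WeakDual ℝ X | |g (u p.1) - (p.2 : ℝ)| < (q : ℝ)} := by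
        ext g
        simp [Set.mem_iInter, List.mem_toFinset, hWsetdef]
      rw [heq]
      apply isOpen_biInter_finset
      intro p _
      have hc : Continuous fun g : WeakDual ℝ X => |g (u p.1) - (p.2 : ℝ)| :=
        ((WeakDual.eval_continuous (u p.1)).sub continuous_const).abs
      exact isOpen_lt hc continuous_const
  set Wn : ℕ → Set (WeakDual ℝ X) := fun n =>
    if (∃ f ∈ closedBall (0 : StrongDual ℝ X) 1,
        StrongDual.toWeakDual f ∈ Wset (Encodable.decode n)) then Wset (Encodable.decode n)
    else Set.univ with hWndef
  have hWnhit : ∀ n, (∃ f ∈ closedBall (0 : StrongDual ℝ X) 1,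
      StrongDual.toWeakDual f ∈ Wset (Encodable.decode n)) → Wn n = Wset (Encodable.decode n) := by
    intro n h
    simp only [hWndef]
    exact if_pos h
  have hWnmiss : ∀ n, ¬ (∃ f ∈ closedBall (0 : StrongDual ℝ X) 1,
      StrongDual.toWeakDual f ∈ Wset (Encodable.decode n)) → Wn n = Set.univ := by
    intro n h
    simp only [hWndef]
    exact if_neg h
  have hWnopen : ∀ n, IsOpen (Wn n) := by
    intro n
    by_cases h : ∃ f ∈ closedBall (0 : StrongDual ℝ X) 1,
        StrongDual.toWeakDual f ∈ Wset (Encodable.decode n)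
    · rw [hWnhit n h]; exact hWsetopen _
    · rw [hWnmiss n h]; exact isOpen_univ
  have hWnne : ∀ n, ∃ f ∈ closedBall (0 : StrongDual ℝ X) 1, StrongDual.toWeakDual f ∈ Wn n := by
    intro n
    by_cases h : ∃ f ∈ closedBall (0 : StrongDual ℝ X) 1,
        StrongDual.toWeakDual f ∈ Wset (Encodable.decode n)
    · rw [hWnhit n h]; exact h
    · rw [hWnmiss n h]; exact ⟨0, mem_closedBall_self zero_le_one, Set.mem_univ _⟩
  -- the recursive construction
  have keyn : ∀ (n : ℕ) (l : List (StrongDual ℝ X)), ∃ ξ : StrongDual ℝ X, ‖ξ‖ = 1 ∧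
      StrongDual.toWeakDual ξ ∈ Wn n ∧
      ε < Metric.infDist ξ ((Submodule.span ℝ {x | x ∈ l} : Submodule ℝ (StrongDual ℝ X)) :
        Set (StrongDual ℝ X)) := by
    intro n l
    exact key_lemma hinf ε ε' hε hεε' hdiam _ (FiniteDimensional.span_of_finite ℝ l.finite_toSet) (Wn n)
      (hWnopen n) (hWnne n)
  choose pick hpick1 hpick2 hpick3 using keyn
  set prev : ℕ → List (StrongDual ℝ X) := fun n => Nat.rec [] (fun m l => l ++ [pick m l]) n
    with hprevdef
  set ξ : ℕ → StrongDual ℝ X := fun n => pick n (prev n) with hxidef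
  have hprevsucc : ∀ n, prev (n + 1) = prev n ++ [ξ n] := fun n => rfl
  have hprev : ∀ n, prev n = (List.range n).map ξ := by
    intro n
    induction n with
    | zero => rfl
    | succ m ih => rw [hprevsucc, ih, List.range_succ, List.map_append]; rfl
  have hset : ∀ n, {x | x ∈ prev n} = ξ '' {m | m < n} := by
    intro n
    ext y
    simp only [hprev n, Set.mem_setOf_eq, List.mem_map, List.mem_range, Set.mem_image]
  refine ⟨ξ, fun n => hpick1 n (prev n), ?_, fun n _ => ?_⟩
  · -- density
    intro f hfD
    rw [Set.mem_preimage, _root_.mem_closure_iff]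
    intro o ho hfo
    obtain ⟨s, δ, hδ0, hsδ⟩ := basic_nbhd ho hfo
    -- approximate
    have hf1 : ‖f‖ ≤ 1 := by simpa [dist_zero_right] using mem_closedBall.mp hfD
    have hks : ∀ (x : X), x ∈ s → ∃ kx : ℕ, dist x (u kx) < δ / 8 :=
      fun x _ => (Metric.denseRange_iff.mp hu) x (δ/8) (by linarith)
    choose k hk using hks
    have hcs : ∀ (x : X) (hx : x ∈ s), ∃ c : ℚ, |f (u (k x hx)) - (c : ℝ)| < δ / 8 := by
      intro x hx
      obtain ⟨c, hc1, hc2⟩ := exists_rat_btwn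
        (show f (u (k x hx)) - δ/8 < f (u (k x hx)) + δ/8 by linarith)
      exact ⟨c, abs_sub_lt_iff.mpr ⟨by linarith, by linarith⟩⟩
    choose c hc using hcs
    obtain ⟨q, hq1, hq2⟩ := exists_rat_btwn (show (δ:ℝ)/8 < δ/4 by linarith)
    classical
    set l : List (ℕ × ℚ) := s.attach.toList.map (fun x => (k x.1 x.2, c x.1 x.2)) with hldef
    set e : List (ℕ × ℚ) × ℚ := (l, q) with hedef
    set n := Encodable.encode e with hndef
    have hdec : (Encodable.decode n : Option (List (ℕ × ℚ) × ℚ)) = some e := by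
      rw [hndef]; exact Encodable.encodek e
    have hfW : StrongDual.toWeakDual f ∈ Wset (Encodable.decode n) := by
      rw [hdec]
      intro p hp
      simp only [hldef, List.mem_map] at hp
      obtain ⟨x, hxmem, rfl⟩ := hp
      exact lt_trans (hc x.1 x.2) hq1
    have hWneq := hWnhit n ⟨f, hfD, hfW⟩
    have hξW : StrongDual.toWeakDual (ξ n) ∈ Wset (Encodable.decode n) := by
      rw [← hWneq]; exact hpick2 n (prev n)
    have hξnorm : ‖ξ n‖ = 1 := hpick1 n (prev n)
    refine ⟨StrongDual.toWeakDual (ξ n), hsδ (ξ n) ?_, ⟨ξ n, ⟨n, rfl⟩, rfl⟩⟩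
    intro x hx
    have hb1 : |ξ n x - ξ n (u (k x hx))| ≤ ‖x - u (k x hx)‖ := by
      have h := (ξ n).le_opNorm (x - u (k x hx))
      rw [map_sub, hξnorm, one_mul] at h
      simpa [Real.norm_eq_abs] using h
    have hb2 : |ξ n (u (k x hx)) - (c x hx : ℝ)| < (q : ℝ) := by
      have hmem : ((k x hx, c x hx) : ℕ × ℚ) ∈ l := by
        rw [hldef]
        exact List.mem_map.mpr ⟨⟨x, hx⟩, Finset.mem_toList.mpr (s.mem_attach ⟨x, hx⟩), rfl⟩
      have h' : ∀ p ∈ l, |(StrongDual.toWeakDual (ξ n)) (u p.1) - (p.2:ℝ)| < (q:ℝ) := by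
        have h'' := hξW
        rw [hdec] at h''
        exact h''
      exact h' (k x hx, c x hx) hmem
    have hb3 : |(c x hx : ℝ) - f (u (k x hx))| < δ / 8 := by
      rw [abs_sub_comm]; exact hc x hx
    have hb4 : |f (u (k x hx)) - f x| ≤ ‖u (k x hx) - x‖ := by
      have h := f.le_opNorm (u (k x hx) - x)
      rw [map_sub] at h
      have h2 : ‖f‖ * ‖u (k x hx) - x‖ ≤ 1 * ‖u (k x hx) - x‖ :=
        mul_le_mul_of_nonneg_right hf1 (norm_nonneg _)
      rw [one_mul] at h2
      calc |f (u (k x hx)) - f x| = ‖f (u (k x hx)) - f x‖ := (Real.norm_eq_abs _).symm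
        _ ≤ ‖f‖ * ‖u (k x hx) - x‖ := h
        _ ≤ ‖u (k x hx) - x‖ := h2
    have hd1 : ‖x - u (k x hx)‖ < δ / 8 := by
      rw [← dist_eq_norm]; exact hk x hx
    have hd2 : ‖u (k x hx) - x‖ < δ / 8 := by
      rw [← dist_eq_norm, dist_comm]; exact hk x hx
    have htri1 : |ξ n x - (c x hx : ℝ)| ≤
        |ξ n x - ξ n (u (k x hx))| + |ξ n (u (k x hx)) - (c x hx : ℝ)| := abs_sub_le _ _ _
    have htri2 : |ξ n x - f (u (k x hx))| ≤
        |ξ n x - (c x hx : ℝ)| + |(c x hx : ℝ) - f (u (k x hx))| := abs_sub_le _ _ _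
    have htri3 : |ξ n x - f x| ≤
        |ξ n x - f (u (k x hx))| + |f (u (k x hx)) - f x| := abs_sub_le _ _ _
    have hq2' : (q : ℝ) < δ / 4 := hq2
    linarith
  · have h := hpick3 n (prev n)
    rw [hset n] at h
    exact h
end

section
/- Let X be a real or complex Banach space and U ⊆ X an open convex set containing 0. Then the sets Hₙ = n·B_X ∩ (1 − 1/n)·U, n ∈ ℕ, form a fundamental family of convex U-bounded sets: (a) each Hₙ is bounded and has positive norm-distance to X \ U; (b) every U-bounded set is contained in some Hₙ; (c) there exist rₙ > 0 with Hₙ + rₙ·B_X ⊆ H_{n+1}. -/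
open Metric Pointwise

/-- `B` is a `U`-bounded subset of the open set `U`: it is norm-bounded and has positive
distance to the complement of `U`. -/
def UBounded {X : Type*} [SeminormedAddCommGroup X] (U B : Set X) : Prop :=
  B ⊆ U ∧ Bornology.IsBounded B ∧ ∃ c > 0, ∀ x ∈ B, ∀ y ∉ U, c ≤ dist x y

/-- Key geometric lemma: if `ball 0 δ ⊆ U` with `U` convex and `z ∈ s • U` for `0 ≤ s < 1`,
then the ball of radius `(1 - s) * δ` around `z` is contained in `U`. -/
lemma key_ball {X : Type*} [NormedAddCommGroup X] [NormedSpace ℝ X]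
    {U : Set X} (hUc : Convex ℝ U) {δ : ℝ} (hδ : ball (0 : X) δ ⊆ U)
    {s : ℝ} (hs0 : 0 ≤ s) (hs1 : s < 1) {z : X} (hz : z ∈ s • U) :
    ball z ((1 - s) * δ) ⊆ U := by
  obtain ⟨u, hu, rfl⟩ := hz
  intro w hw
  have h1s : (0 : ℝ) < 1 - s := by linarith
  set v := (1 - s)⁻¹ • (w - s • u) with hv
  have hvU : v ∈ U := by
    apply hδ
    rw [mem_ball_zero_iff, hv, norm_smul, Real.norm_eq_abs, abs_of_pos (inv_pos.mpr h1s)]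
    rw [mem_ball, dist_eq_norm] at hw
    calc (1 - s)⁻¹ * ‖w - s • u‖ < (1 - s)⁻¹ * ((1 - s) * δ) :=
          mul_lt_mul_of_pos_left hw (inv_pos.mpr h1s)
      _ = δ := by field_simp
  have hw' : w = s • u + (1 - s) • v := by
    rw [hv, smul_smul, mul_inv_cancel₀ h1s.ne', one_smul]
    abel
  rw [hw']
  exact hUc hu hvU hs0 h1s.le (by ring)

/-- For an open convex set `U ∋ 0` in a Banach space, the sets
`Hₙ = n B_X ∩ (1 - 1/n) U` form a fundamental family of convex `U`-bounded sets:
each `Hₙ` is convex and `U`-bounded, every `U`-bounded set is contained in some `Hₙ`,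
and `Hₙ + rₙ B_X ⊆ H_{n+1}` for suitable `rₙ > 0`. -/
theorem fundamental_family_of_convex
    {X : Type*} [NormedAddCommGroup X] [NormedSpace ℝ X] [CompleteSpace X]
    (U : Set X) (hU : IsOpen U) (hUc : Convex ℝ U) (h0 : (0 : X) ∈ U) :
    (∀ n : ℕ, Convex ℝ (ball (0 : X) n ∩ ((1 - 1 / (n : ℝ)) • U)) ∧
        UBounded U (ball (0 : X) n ∩ ((1 - 1 / (n : ℝ)) • U))) ∧
      (∀ B : Set X, UBounded U B →
        ∃ n : ℕ, B ⊆ ball (0 : X) n ∩ ((1 - 1 / (n : ℝ)) • U)) ∧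
      (∀ n : ℕ, ∃ r > (0 : ℝ),
        (ball (0 : X) n ∩ ((1 - 1 / (n : ℝ)) • U)) + ball (0 : X) r ⊆
          ball (0 : X) (n + 1) ∩ ((1 - 1 / ((n : ℝ) + 1)) • U)) := by
  obtain ⟨δ, hδ0, hδ⟩ := Metric.isOpen_iff.mp hU 0 h0
  refine ⟨?_, ?_, ?_⟩
  · -- part (a)
    intro n
    rcases Nat.eq_zero_or_pos n with rfl | hn
    · simp only [Nat.cast_zero, ball_zero, Set.empty_inter]
      exact ⟨convex_empty, Set.empty_subset _, Bornology.isBounded_empty,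
        1, one_pos, fun x hx => absurd hx (Set.notMem_empty x)⟩
    · have hn1 : (1 : ℝ) ≤ n := by exact_mod_cast hn
      set t : ℝ := 1 - 1 / (n : ℝ) with ht
      have ht0 : 0 ≤ t := by
        have h1 : 1 / (n : ℝ) ≤ 1 := by
          rw [div_le_one (by linarith)]; linarith
        simp only [ht]; linarith
      have ht1 : t < 1 := by
        have h1 : 0 < 1 / (n : ℝ) := by positivity
        simp only [ht]; linarith
      have hkey : ∀ {z : X}, z ∈ t • U → ball z ((1 - t) * δ) ⊆ U :=
        fun hz => key_ball hUc hδ ht0 ht1 hz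
      have hpos : 0 < (1 - t) * δ := mul_pos (by linarith) hδ0
      refine ⟨(convex_ball _ _).inter (hUc.smul t), ?_,
        isBounded_ball.subset Set.inter_subset_left, (1 - t) * δ, hpos, ?_⟩
      · intro x hx
        exact hkey hx.2 (mem_ball_self hpos)
      · intro x hx y hy
        by_contra h
        push_neg at h
        exact hy (hkey hx.2 (by rw [mem_ball, dist_comm]; exact h))
  · -- part (b)
    rintro B ⟨hBU, hBb, c, hc, hdist⟩
    obtain ⟨M0, hM0⟩ := hBb.exists_norm_le
    set M : ℝ := max M0 0 with hM
    have hM0' : 0 ≤ M := le_max_right _ _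
    have hMle : ∀ x ∈ B, ‖x‖ ≤ M := fun x hx => (hM0 x hx).trans (le_max_left _ _)
    refine ⟨2 * ⌈M⌉₊ + 2 * ⌈M / c⌉₊ + 2, ?_⟩
    set n : ℕ := 2 * ⌈M⌉₊ + 2 * ⌈M / c⌉₊ + 2 with hn
    have hnge : 2 * M + 2 * (M / c) + 2 ≤ (n : ℝ) := by
      have h1 : M ≤ (⌈M⌉₊ : ℝ) := Nat.le_ceil M
      have h2 : M / c ≤ (⌈M / c⌉₊ : ℝ) := Nat.le_ceil _
      push_cast [hn]
      linarith
    have hMc : 0 ≤ M / c := div_nonneg hM0' hc.le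
    have hn2 : (2 : ℝ) ≤ (n : ℝ) := by linarith
    set t : ℝ := 1 - 1 / (n : ℝ) with ht
    have htge : (1 : ℝ) / 2 ≤ t := by
      have : 1 / (n : ℝ) ≤ 1 / 2 := by
        apply one_div_le_one_div_of_le <;> linarith
      simp only [ht]; linarith
    have ht0 : 0 < t := lt_of_lt_of_le (by norm_num) htge
    have ht1 : t ≤ 1 := by
      have : 0 ≤ 1 / (n : ℝ) := by positivity
      simp only [ht]; linarith
    have htt : t * t⁻¹ = 1 := mul_inv_cancel₀ ht0.ne'
    have htinvpos : 0 < t⁻¹ := inv_pos.mpr ht0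
    have htinv2 : t⁻¹ ≤ 2 := by nlinarith
    have htinv1 : 1 ≤ t⁻¹ := by
      linarith [mul_le_mul_of_nonneg_right ht1 htinvpos.le]
    intro x hx
    have hxM : ‖x‖ ≤ M := hMle x hx
    constructor
    · rw [mem_ball_zero_iff]
      calc ‖x‖ ≤ M := hxM
        _ < (n : ℝ) := by linarith
    · have hsxU : t⁻¹ • x ∈ U := by
        by_contra hnot
        have hd := hdist x hx _ hnot
        have hdval : dist x (t⁻¹ • x) = (t⁻¹ - 1) * ‖x‖ := by
          rw [dist_eq_norm]
          have : x - t⁻¹ • x = (1 - t⁻¹) • x := by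
            rw [sub_smul, one_smul]
          rw [this, norm_smul, Real.norm_eq_abs, abs_of_nonpos (by linarith)]
          ring
        have hbound : (t⁻¹ - 1) * ‖x‖ < c := by
          have h1t : 1 - t = 1 / (n : ℝ) := by rw [ht]; ring
          have heq : t⁻¹ - 1 = (1 / (n : ℝ)) * t⁻¹ := by
            rw [← h1t]; linear_combination htt
          have h1 : t⁻¹ - 1 ≤ 2 / (n : ℝ) := by
            rw [heq]
            rw [div_eq_mul_inv 2 (n : ℝ), one_div, mul_comm (2 : ℝ)]
            exact mul_le_mul_of_nonneg_left htinv2 (by positivity)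
          have h2 : (t⁻¹ - 1) * ‖x‖ ≤ (2 / (n : ℝ)) * M :=
            mul_le_mul h1 hxM (norm_nonneg x) (by positivity)
          have h3 : (2 / (n : ℝ)) * M < c := by
            rw [div_mul_eq_mul_div, div_lt_iff₀ (by linarith : (0:ℝ) < (n : ℝ))]
            have hcn : c * (2 * M + 2 * (M / c) + 2) ≤ c * (n : ℝ) :=
              mul_le_mul_of_nonneg_left hnge hc.le
            have hcM : c * (M / c) = M := by field_simp
            nlinarith
          linarith
        rw [hdval] at hd
        linarith
      exact ⟨t⁻¹ • x, hsxU, smul_inv_smul₀ ht0.ne' x⟩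
  · -- part (c)
    intro n
    rcases Nat.eq_zero_or_pos n with rfl | hn
    · refine ⟨1, one_pos, ?_⟩
      simp only [Nat.cast_zero, ball_zero, Set.empty_inter, Set.empty_add]
      exact Set.empty_subset _
    · have hn1 : (1 : ℝ) ≤ n := by exact_mod_cast hn
      set t : ℝ := 1 - 1 / (n : ℝ) with htdef
      set t' : ℝ := 1 - 1 / ((n : ℝ) + 1) with ht'def
      have hn0 : (0 : ℝ) < n := by linarith
      have htt' : t < t' := by
        have : 1 / ((n : ℝ) + 1) < 1 / (n : ℝ) :=
          one_div_lt_one_div_of_lt hn0 (by linarith)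
        simp only [htdef, ht'def]; linarith
      have ht0 : 0 ≤ t := by
        have : 1 / (n : ℝ) ≤ 1 := by rw [div_le_one hn0]; linarith
        simp only [htdef]; linarith
      have ht'0 : 0 < t' := by linarith
      have hs1 : t / t' < 1 := (div_lt_one ht'0).mpr htt'
      have hs0 : 0 ≤ t / t' := div_nonneg ht0 ht'0.le
      refine ⟨min 1 ((t' - t) * δ), lt_min one_pos (mul_pos (by linarith) hδ0), ?_⟩
      rintro z ⟨x, hx, y, hy, rfl⟩
      rw [mem_ball_zero_iff] at hy
      have hy1 : ‖y‖ < 1 := hy.trans_le (min_le_left _ _)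
      have hy2 : ‖y‖ < (t' - t) * δ := hy.trans_le (min_le_right _ _)
      constructor
      · rw [mem_ball_zero_iff]
        have hxn : ‖x‖ < n := mem_ball_zero_iff.mp hx.1
        calc ‖x + y‖ ≤ ‖x‖ + ‖y‖ := norm_add_le x y
          _ < (n : ℝ) + 1 := by linarith
      · obtain ⟨u, hu, hxu⟩ := hx.2
        have h1 : t'⁻¹ • x ∈ (t / t') • U :=
          ⟨u, hu, by rw [← hxu, smul_smul, div_eq_inv_mul]⟩
        have h2 : t'⁻¹ • (x + y) ∈ U := by
          apply key_ball hUc hδ hs0 hs1 h1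
          rw [mem_ball, dist_eq_norm]
          have heq : t'⁻¹ • (x + y) - t'⁻¹ • x = t'⁻¹ • y := by
            rw [smul_add]; abel
          rw [heq, norm_smul, Real.norm_eq_abs, abs_of_pos (inv_pos.mpr ht'0)]
          have heq2 : (1 - t / t') * δ = t'⁻¹ * ((t' - t) * δ) := by
            field_simp
          rw [heq2]
          exact mul_lt_mul_of_pos_left hy2 (inv_pos.mpr ht'0)
        exact ⟨t'⁻¹ • (x + y), h2, smul_inv_smul₀ ht'0.ne' _⟩
end

section
/- Let Y be a normed space, A ⊆ Y a nonempty convex set, x ∈ Y, and d > 0 with dist(x, A) ≥ d. Then for every δ ∈ (0,1) there exists y ∈ Y with ‖y‖ = 1 such that for every t > 0, dist(x + t·y, A) ≥ d + (1 − δ)·t. -/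
open Metric

/-- Separation lemma: if `A` is a nonempty convex set with `dist(x, A) ≥ d > 0`, then for
every `δ ∈ (0,1)` there is a norm-one vector `y` such that `dist(x + t y, A) ≥ d + (1 - δ) t`
for all `t > 0`. -/
theorem exists_direction_increasing_dist
    {Y : Type*} [NormedAddCommGroup Y] [NormedSpace ℝ Y]
    (A : Set Y) (hA : Convex ℝ A) (hAne : A.Nonempty)
    (x : Y) (d : ℝ) (hd : 0 < d) (hdist : d ≤ infDist x A)
    (δ : ℝ) (hδ0 : 0 < δ) (hδ1 : δ < 1) :
    ∃ y : Y, ‖y‖ = 1 ∧ ∀ t : ℝ, 0 < t → d + (1 - δ) * t ≤ infDist (x + t • y) A := by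
  -- ball is disjoint from A
  have hdisj : Disjoint (ball x d) A := by
    rw [Set.disjoint_left]
    intro z hz hzA
    have h1 : infDist x A ≤ dist x z := infDist_le_dist_of_mem hzA
    have h2 : dist x z < d := mem_ball'.mp hz
    linarith
  obtain ⟨f, u, hfu, huA⟩ := geometric_hahn_banach_open (convex_ball x d) isOpen_ball hA hdisj
  have hxlt : f x < u := hfu x (mem_ball_self hd)
  -- f ≤ u on the closed ball by continuity
  have hclosed : ∀ z ∈ closedBall x d, f z ≤ u := by
    have hsub : closedBall x d ⊆ {z | f z ≤ u} := by
      rw [← closure_ball x hd.ne']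
      exact closure_minimal (fun z hz => (hfu z hz).le)
        (isClosed_le f.continuous continuous_const)
    exact fun z hz => hsub hz
  -- hence d * ‖f‖ ≤ u - f x
  have hfnorm : ‖f‖ ≤ (u - f x) / d := by
    apply ContinuousLinearMap.opNorm_le_bound _ (div_nonneg (by linarith) hd.le)
    intro v
    rcases eq_or_ne v 0 with rfl | hv
    · simp
    · have hvpos : (0:ℝ) < ‖v‖ := norm_pos_iff.mpr hv
      have key : ∀ w : Y, ‖w‖ = d → f w ≤ u - f x := by
        intro w hw
        have hmem : x + w ∈ closedBall x d := by
          simp [mem_closedBall, dist_self_add_left, hw]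
        have := hclosed _ hmem
        simp only [map_add] at this
        linarith
      have h1 : f ((d / ‖v‖) • v) ≤ u - f x := by
        apply key
        rw [norm_smul, Real.norm_eq_abs, abs_of_pos (by positivity)]
        field_simp
      have h2 : f ((d / ‖v‖) • (-v)) ≤ u - f x := by
        apply key
        rw [norm_smul, Real.norm_eq_abs, abs_of_pos (by positivity), norm_neg]
        field_simp
      rw [map_smul, smul_eq_mul] at h1
      rw [map_smul, smul_eq_mul, map_neg] at h2
      rw [Real.norm_eq_abs, abs_le]
      have hdvd : d / ‖v‖ > 0 := by positivity
      constructor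
      · rw [neg_le]
        rw [div_mul_eq_mul_div, le_div_iff₀ hd]
        calc -f v * d = ‖v‖ * (d / ‖v‖ * -f v) := by field_simp
          _ ≤ ‖v‖ * (u - f x) := mul_le_mul_of_nonneg_left h2 hvpos.le
          _ = (u - f x) * ‖v‖ := by ring
      · rw [div_mul_eq_mul_div, le_div_iff₀ hd]
        calc f v * d = ‖v‖ * (d / ‖v‖ * f v) := by field_simp
          _ ≤ ‖v‖ * (u - f x) := mul_le_mul_of_nonneg_left h1 hvpos.le
          _ = (u - f x) * ‖v‖ := by ring
  have hfpos : 0 < ‖f‖ := by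
    rcases hAne with ⟨a, ha⟩
    rcases (norm_nonneg f).lt_or_eq with h | h
    · exact h
    · exfalso
      have hf0 : f = 0 := norm_le_zero_iff.mp (le_of_eq h.symm)
      rw [hf0] at hxlt huA
      have h2 := huA a ha
      simp only [ContinuousLinearMap.zero_apply] at hxlt h2
      linarith
  -- choose a near-norming vector
  have hlt : (1 - δ) * ‖f‖ < ‖f‖ := by nlinarith
  obtain ⟨v, hv1, hv2⟩ := f.exists_lt_apply_of_lt_opNorm hlt
  have hvne : v ≠ 0 := by
    rintro rfl
    simp only [map_zero, norm_zero] at hv2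
    nlinarith
  have hvpos : (0:ℝ) < ‖v‖ := norm_pos_iff.mpr hvne
  have hinv1 : (1:ℝ) ≤ ‖v‖⁻¹ := one_le_inv₀ hvpos |>.mpr hv1.le
  -- y = (±‖v‖⁻¹) • v, sign so that f y ≤ -(1-δ)‖f‖
  set c : ℝ := if f v ≤ 0 then (‖v‖)⁻¹ else -(‖v‖)⁻¹ with hc
  have habs : |c| = ‖v‖⁻¹ := by
    rw [hc]
    split_ifs <;> simp [abs_of_pos (inv_pos.mpr hvpos)]
  refine ⟨c • v, ?_, ?_⟩
  · rw [norm_smul, Real.norm_eq_abs, habs]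
    exact inv_mul_cancel₀ hvpos.ne'
  · have hδf : (0:ℝ) ≤ (1 - δ) * ‖f‖ := mul_nonneg (by linarith) hfpos.le
    have hfy : f (c • v) ≤ -((1 - δ) * ‖f‖) := by
      rw [map_smul, smul_eq_mul, hc]
      have hfv : (1 - δ) * ‖f‖ < |f v| := by rwa [Real.norm_eq_abs] at hv2
      split_ifs with h
      · rw [abs_of_nonpos h] at hfv
        nlinarith
      · push_neg at h
        rw [abs_of_pos h] at hfv
        nlinarith
    intro t ht
    by_contra hcon
    push_neg at hcon
    obtain ⟨a, ha, hda⟩ := (infDist_lt_iff hAne).mp hcon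
    -- pointwise bound contradicts hda
    have h1 : d * ‖f‖ ≤ f a - f x := by
      rw [le_div_iff₀ hd] at hfnorm
      nlinarith [huA a ha]
    have h2 : f (a - (x + t • c • v)) ≤ ‖f‖ * dist (x + t • c • v) a := by
      have hle := f.le_opNorm (a - (x + t • c • v))
      rw [Real.norm_eq_abs] at hle
      have heq : ‖a - (x + t • c • v)‖ = dist (x + t • c • v) a := (dist_eq_norm' _ _).symm
      rw [← heq]
      exact le_trans (le_abs_self _) hle
    have h3 : f (a - (x + t • c • v)) = f a - f x - t * f (c • v) := by
      simp only [map_sub, map_add, map_smul, smul_eq_mul]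
      ring
    rw [h3] at h2
    have h4 : (d + (1 - δ) * t) * ‖f‖ ≤ ‖f‖ * dist (x + t • c • v) a := by
      nlinarith
    have h5 : d + (1 - δ) * t ≤ dist (x + t • c • v) a := by
      rw [mul_comm _ ‖f‖] at h4
      exact (mul_le_mul_iff_right₀ hfpos).mp h4
    linarith
end

section
/- Let A = {x ∈ ℓ∞(ℕ×ℕ) : for every k, the set {n : x(k,n) ≠ k·x(k,1)} is finite}. Then A is a linear subspace of ℓ∞(ℕ×ℕ) = ℓ¹(ℕ×ℕ)* and: (a) every finitely supported element of ℓ∞(ℕ×ℕ) belongs to A⁽¹⁾ (the set of weak* limits of bounded nets/sequences from A); (b) every x ∈ A⁽¹⁾ satisfies lim_{k→∞} x(k,1) = 0. Consequently A⁽¹⁾ is contained in a proper closed hyperplane while A⁽²⁾ = ℓ∞(ℕ×ℕ). -/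
set_option synthInstance.maxHeartbeats 1000000
set_option maxHeartbeats 1000000
set_option linter.unnecessarySimpa false


open scoped ENNReal
open Filter

/-- The set of weak* limits of bounded sequences from `S ⊆ ℓ∞(ℕ×ℕ)`; on bounded sets the
weak* topology of `ℓ∞ = (ℓ¹)*` is the topology of pointwise convergence, and sequences
suffice by separability of the predual. -/
def seqDOne (S : Set (lp (fun _ : ℕ × ℕ => ℝ) ∞)) : Set (lp (fun _ : ℕ × ℕ => ℝ) ∞) :=
  {x | ∃ u : ℕ → lp (fun _ : ℕ × ℕ => ℝ) ∞, (∀ j, u j ∈ S) ∧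
    (∃ M : ℝ, ∀ j, ‖u j‖ ≤ M) ∧
    ∀ p : ℕ × ℕ, Tendsto (fun j => (u j : ℕ × ℕ → ℝ) p) atTop (nhds ((x : ℕ × ℕ → ℝ) p))}

/-- `A = {x ∈ ℓ∞(ℕ×ℕ) : for each k, x(k,n) = (k+1)·x(k,0) for all but finitely many n}`. -/
def A13 : Set (lp (fun _ : ℕ × ℕ => ℝ) ∞) :=
  {x | ∀ k : ℕ,
    {n : ℕ | (x : ℕ × ℕ → ℝ) (k, n) ≠ ((k : ℝ) + 1) * (x : ℕ × ℕ → ℝ) (k, 0)}.Finite}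



lemma finsupp_mem_seqDOne (x : lp (fun _ : ℕ × ℕ => ℝ) ∞)
    (hx : {p : ℕ × ℕ | (x : ℕ × ℕ → ℝ) p ≠ 0}.Finite) : x ∈ seqDOne A13 := by
  classical
  set F := hx.toFinset with hF
  set C : ℝ := ‖x‖ + ∑ p ∈ F, ((p.1 : ℝ) + 1) * |(x : ℕ × ℕ → ℝ) p| with hCdef
  have hterm : ∀ p ∈ F, 0 ≤ ((p.1 : ℝ) + 1) * |(x : ℕ × ℕ → ℝ) p| := fun p _ =>
    mul_nonneg (by positivity) (abs_nonneg _)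
  have hC0 : 0 ≤ C := add_nonneg (norm_nonneg _) (Finset.sum_nonneg hterm)
  have hnormC : ‖x‖ ≤ C := le_add_of_nonneg_right (Finset.sum_nonneg hterm)
  have hkey : ∀ k : ℕ, |((k : ℝ) + 1) * (x : ℕ × ℕ → ℝ) (k, 0)| ≤ C := by
    intro k
    by_cases h : (x : ℕ × ℕ → ℝ) (k, 0) = 0
    · simp [h, hC0]
    · have hmem : ((k, 0) : ℕ × ℕ) ∈ F := by simp [hF, Set.Finite.mem_toFinset, h]
      have := Finset.single_le_sum hterm hmem
      calc |((k : ℝ) + 1) * (x : ℕ × ℕ → ℝ) (k, 0)|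
          = ((k : ℝ) + 1) * |(x : ℕ × ℕ → ℝ) (k, 0)| := by
            rw [abs_mul, abs_of_nonneg (by positivity : (0:ℝ) ≤ (k : ℝ) + 1)]
        _ ≤ ∑ p ∈ F, ((p.1 : ℝ) + 1) * |(x : ℕ × ℕ → ℝ) p| := this
        _ ≤ C := le_add_of_nonneg_left (norm_nonneg _)
  set f : ℕ → (ℕ × ℕ) → ℝ := fun j p =>
    if p.2 ≤ j then (x : ℕ × ℕ → ℝ) p else ((p.1 : ℝ) + 1) * (x : ℕ × ℕ → ℝ) (p.1, 0) with hf
  have hb : ∀ j p, |f j p| ≤ C := by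
    intro j p
    by_cases h : p.2 ≤ j
    · simp only [hf, if_pos h]
      exact le_trans (by simpa [Real.norm_eq_abs] using lp.norm_apply_le_norm ENNReal.top_ne_zero x p) hnormC
    · simp only [hf, if_neg h]
      exact hkey p.1
  have hm : ∀ j, Memℓp (f j) ∞ := by
    intro j
    refine memℓp_infty ⟨C, ?_⟩
    rintro - ⟨p, rfl⟩
    simpa [Real.norm_eq_abs] using hb j p
  refine ⟨fun j => ⟨f j, hm j⟩, ?_, ⟨C, ?_⟩, ?_⟩
  · intro j k
    refine (Set.finite_Iic j).subset ?_
    intro n hn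
    simp only [Set.mem_setOf_eq] at hn
    by_contra hnj
    simp only [Set.mem_Iic, not_le] at hnj
    apply hn
    show f j (k, n) = ((k : ℝ) + 1) * f j (k, 0)
    simp [hf, not_le.mpr hnj, Nat.zero_le j]
  · intro j
    exact lp.norm_le_of_forall_le hC0 fun p => by simpa [Real.norm_eq_abs] using hb j p
  · rintro ⟨k, n⟩
    apply tendsto_atTop_of_eventually_const (i₀ := n)
    intro j hj
    show f j (k, n) = _
    simp [hf, hj]

lemma seqDOne_A13_tendsto (x : lp (fun _ : ℕ × ℕ => ℝ) ∞) (hx : x ∈ seqDOne A13) :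
    Tendsto (fun k : ℕ => (x : ℕ × ℕ → ℝ) (k, 0)) atTop (nhds 0) := by
  obtain ⟨u, hu, ⟨M, hM⟩, hconv⟩ := hx
  have hb : ∀ j k, |(u j : ℕ × ℕ → ℝ) (k, 0)| ≤ M / ((k : ℝ) + 1) := by
    intro j k
    have hfin := hu j k
    obtain ⟨n, hn⟩ := (Set.Finite.infinite_compl hfin).nonempty
    simp only [Set.mem_compl_iff, Set.mem_setOf_eq, not_not] at hn
    have h1 : |(u j : ℕ × ℕ → ℝ) (k, n)| ≤ M := by
      refine le_trans ?_ (hM j)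
      simpa [Real.norm_eq_abs] using lp.norm_apply_le_norm ENNReal.top_ne_zero (u j) (k, n)
    rw [hn, abs_mul, abs_of_nonneg (by positivity : (0:ℝ) ≤ (k : ℝ) + 1)] at h1
    rw [le_div_iff₀ (by positivity : (0:ℝ) < (k : ℝ) + 1)]
    linarith [h1]
  have hxb : ∀ k : ℕ, |(x : ℕ × ℕ → ℝ) (k, 0)| ≤ M / ((k : ℝ) + 1) := fun k =>
    le_of_tendsto ((hconv (k, 0)).abs) (Filter.Eventually.of_forall fun j => hb j k)
  refine squeeze_zero_norm (fun k => by simpa [Real.norm_eq_abs] using hxb k) ?_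
  have : Tendsto (fun k : ℕ => M * (1 / ((k : ℝ) + 1))) atTop (nhds (M * 0)) :=
    tendsto_one_div_add_atTop_nhds_zero_nat.const_mul M
  simpa [mul_one_div, div_eq_mul_inv] using this

noncomputable def Z13 : Submodule ℝ (lp (fun _ : ℕ × ℕ => ℝ) ∞) where
  carrier := {x | Tendsto (fun k : ℕ => (x : ℕ × ℕ → ℝ) (k, 0)) atTop (nhds 0)}
  zero_mem' := by simpa [lp.coeFn_zero] using (tendsto_const_nhds : Tendsto (fun _ : ℕ => (0:ℝ)) atTop (nhds 0))
  add_mem' := by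
    intro a b ha hb
    have := ha.add hb
    simpa [lp.coeFn_add] using this
  smul_mem' := by
    intro c a ha
    have := ha.const_mul c
    simpa [lp.coeFn_smul] using this

lemma Z13_closed : IsClosed (Z13 : Set (lp (fun _ : ℕ × ℕ => ℝ) ∞)) := by
  rw [← closure_subset_iff_isClosed]
  intro x hx
  rw [Metric.mem_closure_iff] at hx
  show Tendsto _ _ _
  rw [NormedAddCommGroup.tendsto_nhds_zero]
  intro ε hε
  obtain ⟨z, hzZ, hz⟩ := hx (ε / 2) (by positivity)
  have hzt : Tendsto (fun k : ℕ => (z : ℕ × ℕ → ℝ) (k, 0)) atTop (nhds 0) := hzZ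
  rw [NormedAddCommGroup.tendsto_nhds_zero] at hzt
  filter_upwards [hzt (ε / 2) (by positivity)] with k hk
  have h1 : ‖(x : ℕ × ℕ → ℝ) (k, 0) - (z : ℕ × ℕ → ℝ) (k, 0)‖ ≤ ‖x - z‖ := by
    have := lp.norm_apply_le_norm (E := fun _ : ℕ × ℕ => ℝ) ENNReal.top_ne_zero (x - z) (k, 0)
    simpa [lp.coeFn_sub] using this
  have h2 : ‖x - z‖ < ε / 2 := by rwa [← dist_eq_norm]
  calc ‖(x : ℕ × ℕ → ℝ) (k, 0)‖
      ≤ ‖(x : ℕ × ℕ → ℝ) (k, 0) - (z : ℕ × ℕ → ℝ) (k, 0)‖ + ‖(z : ℕ × ℕ → ℝ) (k, 0)‖ := by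
        simpa using norm_add_le ((x : ℕ × ℕ → ℝ) (k, 0) - (z : ℕ × ℕ → ℝ) (k, 0)) ((z : ℕ × ℕ → ℝ) (k, 0))
    _ < ε / 2 + ε / 2 := add_lt_add (h1.trans_lt h2) hk
    _ = ε := by ring

/-- `A13` is a linear subspace of `ℓ∞(ℕ×ℕ) = ℓ¹(ℕ×ℕ)*`; every finitely supported element of
`ℓ∞(ℕ×ℕ)` belongs to `A⁽¹⁾`; every `x ∈ A⁽¹⁾` satisfies `x(k,0) → 0` as `k → ∞`;
consequently `A⁽¹⁾` is contained in a proper closed hyperplane while `A⁽²⁾ = ℓ∞(ℕ×ℕ)`. -/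
theorem linfty_example :
    (∃ p : Submodule ℝ (lp (fun _ : ℕ × ℕ => ℝ) ∞),
      (p : Set (lp (fun _ : ℕ × ℕ => ℝ) ∞)) = A13) ∧
    (∀ x : lp (fun _ : ℕ × ℕ => ℝ) ∞, {p : ℕ × ℕ | (x : ℕ × ℕ → ℝ) p ≠ 0}.Finite →
      x ∈ seqDOne A13) ∧
    (∀ x ∈ seqDOne A13,
      Tendsto (fun k : ℕ => (x : ℕ × ℕ → ℝ) (k, 0)) atTop (nhds 0)) ∧
    (∃ φ : StrongDual ℝ (lp (fun _ : ℕ × ℕ => ℝ) ∞), φ ≠ 0 ∧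
      ∀ x ∈ seqDOne A13, φ x = 0) ∧
    seqDOne (seqDOne A13) = Set.univ := by
  refine ⟨?_, fun x hx => finsupp_mem_seqDOne x hx, fun x hx => seqDOne_A13_tendsto x hx, ?_, ?_⟩
  · -- A13 is a submodule
    refine ⟨{ carrier := A13
              zero_mem' := ?_
              add_mem' := ?_
              smul_mem' := ?_ }, rfl⟩
    · intro a b ha hb k
      refine ((ha k).union (hb k)).subset ?_
      intro n hn
      simp only [Set.mem_setOf_eq, Set.mem_union] at hn ⊢
      by_contra h
      push_neg at h
      obtain ⟨h1, h2⟩ := h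
      apply hn
      simp only [lp.coeFn_add, Pi.add_apply, h1, h2]
      ring
    · intro k
      apply Set.Finite.subset (Set.finite_empty)
      intro n hn
      simp [A13, lp.coeFn_zero] at hn
    · intro c a ha k
      refine (ha k).subset ?_
      intro n hn
      simp only [Set.mem_setOf_eq] at hn ⊢
      intro h
      apply hn
      simp only [lp.coeFn_smul, Pi.smul_apply, smul_eq_mul, h]
      ring
  · -- proper closed hyperplane
    set e : lp (fun _ : ℕ × ℕ => ℝ) ∞ :=
      ⟨fun p => if p.2 = 0 then 1 else 0, memℓp_infty ⟨1, by
        rintro - ⟨p, rfl⟩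
        by_cases h : p.2 = 0 <;> simp [h]⟩⟩ with he_def
    have heZ : e ∉ (Z13 : Set (lp (fun _ : ℕ × ℕ => ℝ) ∞)) := by
      intro h
      have h1 : Tendsto (fun k : ℕ => (e : ℕ × ℕ → ℝ) (k, 0)) atTop (nhds 0) := h
      have h2 : (fun k : ℕ => (e : ℕ × ℕ → ℝ) (k, 0)) = fun _ => (1 : ℝ) := by
        funext k; rfl
      rw [h2] at h1
      exact one_ne_zero (tendsto_nhds_unique tendsto_const_nhds h1)
    obtain ⟨f, u, hfu, hue⟩ := geometric_hahn_banach_closed_point Z13.convex Z13_closed heZ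
    have hfZ : ∀ z ∈ Z13, f z = 0 := by
      intro z hz
      by_contra hne
      have := hfu ((u / f z) • z) (Z13.smul_mem _ hz)
      rw [map_smul, smul_eq_mul, div_mul_cancel₀ u hne] at this
      exact lt_irrefl u this
    have h0 : (0:ℝ) < u := by
      have := hfu 0 Z13.zero_mem
      simpa using this
    refine ⟨f, ?_, fun x hx => hfZ x (seqDOne_A13_tendsto x hx)⟩
    intro hf0
    rw [hf0] at hue
    simp at hue
    linarith
  · -- A⁽²⁾ = everything
    ext x
    simp only [Set.mem_univ, iff_true]
    classical
    set g : ℕ → (ℕ × ℕ) → ℝ := fun j p =>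
      if p.1 ≤ j ∧ p.2 ≤ j then (x : ℕ × ℕ → ℝ) p else 0 with hg
    have hb : ∀ j p, ‖g j p‖ ≤ ‖x‖ := by
      intro j p
      by_cases h : p.1 ≤ j ∧ p.2 ≤ j
      · simp only [hg, if_pos h]
        exact lp.norm_apply_le_norm (E := fun _ : ℕ × ℕ => ℝ) ENNReal.top_ne_zero x p
      · simp [hg, if_neg h]
    have hm : ∀ j, Memℓp (g j) ∞ := fun j =>
      memℓp_infty ⟨‖x‖, by rintro - ⟨p, rfl⟩; exact hb j p⟩
    refine ⟨fun j => ⟨g j, hm j⟩, ?_, ⟨‖x‖, fun j => lp.norm_le_of_forall_le (norm_nonneg x) (hb j)⟩, ?_⟩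
    · intro j
      apply finsupp_mem_seqDOne
      refine ((Set.finite_Iic j).prod (Set.finite_Iic j)).subset ?_
      intro p hp
      simp only [Set.mem_setOf_eq] at hp
      have h : p.1 ≤ j ∧ p.2 ≤ j := by
        by_contra h
        exact hp (by simp [hg, if_neg h])
      exact Set.mem_prod.mpr ⟨h.1, h.2⟩
    · intro p
      apply tendsto_atTop_of_eventually_const (i₀ := max p.1 p.2)
      intro j hj
      show g j p = _
      simp [hg, le_of_max_le_left hj, le_of_max_le_right hj]
end
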